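/- Let 𝒜 and ℬ be subspaces of ℂ^d. Then there exist orthonormal bases (a_i) of 𝒜 and (b_j) of ℬ such that ⟨a_i, b_j⟩ = 0 whenever i ≠ j and ⟨a_k, b_k⟩ ≥ 0 for all k (Jordan/canonical bases), obtained via the singular value decomposition of the matrix of inner products of arbitrary orthonormal bases of 𝒜 and ℬ. -/

import Mathlib

open Module

section AuxJordan

lemma exists_perm_front (m : ℕ) (p : Fin m → Prop) [DecidablePred p] :
    ∃ σ : Equiv.Perm (Fin m), ∀ i, p (σ i) ↔ (i : ℕ) < Fintype.card {i // p i} := by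
  set r := Fintype.card {i // p i} with hr
  have hrm : r ≤ m := by simpa using Fintype.card_subtype_le p
  have hcompl : Fintype.card {i // ¬ p i} = m - r := by
    simp [Fintype.card_subtype_compl, hr]
  have hsum : r + (m - r) = m := Nat.add_sub_cancel' hrm
  let e1 : Fin r ≃ {i // p i} := (Fintype.equivFinOfCardEq rfl).symm
  let e2 : Fin (m - r) ≃ {i // ¬ p i} := (Fintype.equivFinOfCardEq hcompl).symm
  let σ0 : Fin (r + (m - r)) ≃ Fin m :=
    finSumFinEquiv.symm.trans ((e1.sumCongr e2).trans (Equiv.sumCompl p))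
  refine ⟨(finCongr hsum.symm).trans σ0, fun i => ?_⟩
  by_cases h : (i : ℕ) < r
  · have : (finCongr hsum.symm) i = Fin.castAdd (m - r) ⟨i, h⟩ := by ext; simp
    simp only [Equiv.trans_apply, this, σ0, finSumFinEquiv_symm_apply_castAdd]
    simp only [Equiv.sumCongr_apply, Sum.map_inl, Equiv.sumCompl_apply_inl]
    exact iff_of_true (e1 ⟨i, h⟩).2 h
  · have h2 : (i : ℕ) - r < m - r := by omega
    have : (finCongr hsum.symm) i = Fin.natAdd r ⟨(i : ℕ) - r, h2⟩ := by
      ext; simp; omega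
    simp only [Equiv.trans_apply, this, σ0, finSumFinEquiv_symm_apply_natAdd]
    simp only [Equiv.sumCongr_apply, Sum.map_inr, Equiv.sumCompl_apply_inr]
    exact iff_of_false (e2 ⟨(i:ℕ) - r, h2⟩).2 h

variable {E : Type*} [NormedAddCommGroup E] [InnerProductSpace ℂ E] [FiniteDimensional ℂ E]

lemma proj_coe_inner_left (K : Submodule ℂ E) (w : E) (y : K) :
    (inner ℂ ((Submodule.orthogonalProjectionOnto K w : K) : E) (y : E) : ℂ) = inner ℂ w (y : E) := by
  have h := Submodule.inner_orthogonalProjectionOnto_eq_of_mem_right (K := K) y w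
  rwa [Submodule.coe_inner] at h

lemma proj_coe_inner_right (K : Submodule ℂ E) (w : E) (y : K) :
    (inner ℂ (y : E) ((Submodule.orthogonalProjectionOnto K w : K) : E) : ℂ) = inner ℂ (y : E) w := by
  have h := Submodule.inner_orthogonalProjectionOnto_eq_of_mem_left (K := K) y w
  rwa [Submodule.coe_inner] at h

set_option synthInstance.maxHeartbeats 1000000 in
lemma coe_coe_inner (K : Submodule ℂ E) (L : Submodule ℂ K) (x y : L) :
    (inner ℂ (((x : K) : E)) (((y : K) : E)) : ℂ) = inner ℂ x y := by
  rw [← Submodule.coe_inner, ← Submodule.coe_inner]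

variable (𝒜 ℬ : Submodule ℂ E)

noncomputable def TT : 𝒜 →L[ℂ] 𝒜 :=
  (Submodule.orthogonalProjectionOnto 𝒜) ∘L ℬ.subtypeL ∘L (Submodule.orthogonalProjectionOnto ℬ) ∘L 𝒜.subtypeL

lemma TT_symm : ((TT 𝒜 ℬ : 𝒜 →L[ℂ] 𝒜) : 𝒜 →ₗ[ℂ] 𝒜).IsSymmetric := by
  intro x y
  simp only [TT, ContinuousLinearMap.coe_coe, ContinuousLinearMap.comp_apply,
    Submodule.subtypeL_apply, Submodule.coe_inner]
  rw [proj_coe_inner_left, proj_coe_inner_right]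
  exact Submodule.inner_starProjection_left_eq_right ℬ (x : E) (y : E)

lemma key0 (x y : 𝒜) :
    (inner ℂ (x : E) ((Submodule.orthogonalProjectionOnto ℬ (y : E) : ℬ) : E) : ℂ) = inner ℂ x (TT 𝒜 ℬ y) := by
  simp only [TT, ContinuousLinearMap.comp_apply, Submodule.subtypeL_apply, Submodule.coe_inner]
  rw [proj_coe_inner_right]

set_option maxHeartbeats 1600000 in
set_option synthInstance.maxHeartbeats 1000000 in
theorem jordan_bases :
    ∃ (a : Fin (finrank ℂ 𝒜) → E) (b : Fin (finrank ℂ ℬ) → E),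
      Orthonormal ℂ a ∧ Orthonormal ℂ b ∧
      (∀ i, a i ∈ 𝒜) ∧ (∀ j, b j ∈ ℬ) ∧
      Submodule.span ℂ (Set.range a) = 𝒜 ∧ Submodule.span ℂ (Set.range b) = ℬ ∧
      (∀ (i : Fin (finrank ℂ 𝒜)) (j : Fin (finrank ℂ ℬ)),
        (i : ℕ) ≠ (j : ℕ) → (inner ℂ (a i) (b j) : ℂ) = 0) ∧
      (∀ (i : Fin (finrank ℂ 𝒜)) (j : Fin (finrank ℂ ℬ)),
        (i : ℕ) = (j : ℕ) → ∃ r : ℝ, 0 ≤ r ∧ (inner ℂ (a i) (b j) : ℂ) = (r : ℂ)) := by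
  classical
  have hT := TT_symm 𝒜 ℬ
  set m := finrank ℂ 𝒜 with hm
  set nB := finrank ℂ ℬ with hnB
  let B := hT.eigenvectorBasis rfl
  let μ0 := hT.eigenvalues rfl
  obtain ⟨σ, hσ⟩ := exists_perm_front m (fun i => μ0 i ≠ 0)
  set r := Fintype.card {i // μ0 i ≠ 0} with hrdef
  let a : Fin m → 𝒜 := fun i => B (σ i)
  let μ : Fin m → ℝ := fun i => μ0 (σ i)
  have hμr : ∀ i, μ i ≠ 0 ↔ (i : ℕ) < r := fun i => hσ i
  have ha_on : Orthonormal ℂ a := B.orthonormal.comp _ σ.injective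
  have hTa : ∀ i, ((TT 𝒜 ℬ : 𝒜 →L[ℂ] 𝒜) : 𝒜 →ₗ[ℂ] 𝒜) (a i) = (μ i : ℂ) • a i := fun i =>
    hT.apply_eigenvectorBasis rfl (σ i)
  let cB : Fin m → ℬ := fun i => Submodule.orthogonalProjectionOnto ℬ ((a i : E))
  have key1 : ∀ i j, (inner ℂ ((a i : E)) ((cB j : E)) : ℂ)
      = (μ j : ℂ) * (if i = j then 1 else 0) := by
    intro i j
    rw [show ((cB j : E)) = ((Submodule.orthogonalProjectionOnto ℬ ((a j : E)) : ℬ) : E) from rfl,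
      key0 𝒜 ℬ (a i) (a j)]
    rw [show (TT 𝒜 ℬ) (a j) = ((TT 𝒜 ℬ : 𝒜 →L[ℂ] 𝒜) : 𝒜 →ₗ[ℂ] 𝒜) (a j) from rfl, hTa j,
      inner_smul_right]
    rw [orthonormal_iff_ite.mp ha_on i j]
  have key2 : ∀ i j, (inner ℂ ((cB i : E)) ((cB j : E)) : ℂ)
      = (μ j : ℂ) * (if i = j then 1 else 0) := by
    intro i j
    rw [show ((cB i : E)) = ((Submodule.orthogonalProjectionOnto ℬ ((a i : E)) : ℬ) : E) from rfl,
      proj_coe_inner_left]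
    exact key1 i j
  have hμnorm : ∀ i, (μ i : ℂ) = (‖(cB i : E)‖ : ℂ) ^ 2 := by
    intro i
    have h := key2 i i
    rw [if_pos rfl, mul_one] at h
    rw [← h, inner_self_eq_norm_sq_to_K]
    norm_cast
  have hμnonneg : ∀ i, 0 ≤ μ i := by
    intro i
    have h := hμnorm i
    have : μ i = ‖(cB i : E)‖ ^ 2 := by exact_mod_cast h
    rw [this]; positivity
  have hczero : ∀ i, μ i = 0 → cB i = 0 := by
    intro i hi
    have h := hμnorm i
    rw [hi] at h
    have h2 : ‖(cB i : E)‖ ^ 2 = 0 := by exact_mod_cast h.symm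
    have h3 : (cB i : E) = 0 := by
      rw [pow_eq_zero_iff (two_ne_zero)] at h2
      exact norm_eq_zero.mp h2
    exact_mod_cast h3
  -- nonzero eigenvalues come first
  have hr_le_m : r ≤ m := (Fintype.card_subtype_le (fun i => μ0 i ≠ 0)).trans_eq (Fintype.card_fin m)
  let ι : Fin r → Fin m := Fin.castLE hr_le_m
  have hμι : ∀ k : Fin r, μ (ι k) ≠ 0 := fun k => (hμr (ι k)).mpr k.2
  have hsqrt_pos : ∀ k : Fin r, 0 < Real.sqrt (μ (ι k)) := fun k =>
    Real.sqrt_pos.mpr (lt_of_le_of_ne (hμnonneg _) (Ne.symm (hμι k)))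
  let g : Fin r → ℬ := fun k => (((Real.sqrt (μ (ι k)))⁻¹ : ℝ) : ℂ) • cB (ι k)
  have hcg : ∀ k : Fin r, cB (ι k) = ((Real.sqrt (μ (ι k)) : ℝ) : ℂ) • g k := by
    intro k
    simp only [g, smul_smul]
    rw [← Complex.ofReal_mul, mul_inv_cancel₀ (hsqrt_pos k).ne', Complex.ofReal_one, one_smul]
  have hginner : ∀ k l : Fin r,
      (inner ℂ (g k) (g l) : ℂ) = if k = l then 1 else 0 := by
    intro k l
    simp only [g, inner_smul_left, inner_smul_right, Submodule.coe_inner]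
    rw [key2, Complex.conj_ofReal]
    have hii : (ι k = ι l) ↔ k = l := Fin.castLE_inj
    by_cases hkl : k = l
    · subst hkl
      rw [if_pos rfl, if_pos rfl, mul_one]
      rw [← Complex.ofReal_mul, ← Complex.ofReal_mul]
      norm_cast
      field_simp
      rw [Real.sq_sqrt (hμnonneg _)]
      exact div_self (hμι k)
    · rw [if_neg (fun h => hkl (hii.mp h)), if_neg hkl]
      ring
  have hg_on : Orthonormal ℂ g := orthonormal_iff_ite.mpr hginner
  have hr_le_nB : r ≤ nB := by
    simpa using hg_on.linearIndependent.fintype_card_le_finrank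
  -- the orthogonal complement of span of g inside ℬ
  let W : Submodule ℂ ℬ := Submodule.span ℂ (Set.range g)
  have hWrank : finrank ℂ W = r := by
    rw [finrank_span_eq_card hg_on.linearIndependent, Fintype.card_fin]
  have hWperp : finrank ℂ (Wᗮ : Submodule ℂ ℬ) = nB - r := by
    have h := Submodule.finrank_add_finrank_orthogonal (K := W)
    rw [hWrank] at h
    omega
  let e : OrthonormalBasis (Fin (nB - r)) ℂ (Wᗮ : Submodule ℂ ℬ) :=
    (stdOrthonormalBasis ℂ (Wᗮ : Submodule ℂ ℬ)).reindex (finCongr hWperp)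
  have hcBW : ∀ i, cB i ∈ W := by
    intro i
    by_cases h : μ i = 0
    · rw [hczero i h]; exact W.zero_mem
    · have hir : (i : ℕ) < r := (hμr i).mp h
      have : i = ι ⟨(i : ℕ), hir⟩ := by ext; simp [ι]
      rw [this, hcg]
      exact W.smul_mem _ (Submodule.subset_span ⟨_, rfl⟩)
  -- definition of b
  let b : Fin nB → E := fun j =>
    if h : (j : ℕ) < r then ((g ⟨j, h⟩ : ℬ) : E)
    else (((e ⟨(j : ℕ) - r, by omega⟩ : (Wᗮ : Submodule ℂ ℬ)) : ℬ) : E)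
  have hbmem : ∀ j, b j ∈ ℬ := by
    intro j
    by_cases h : (j : ℕ) < r <;> simp only [b, h, dif_pos, dif_neg, not_false_iff] <;>
      exact Submodule.coe_mem _
  -- inner ℂ products between a and elements of ℬ factor through cB
  have ha_inner_B : ∀ i (y : ℬ), (inner ℂ ((a i : E)) ((y : E)) : ℂ) = inner ℂ (cB i) y := by
    intro i y
    rw [Submodule.coe_inner, ← proj_coe_inner_left ℬ ((a i : E)) y]
  -- inner ℂ products of a with the complement part vanish
  have ha_perp : ∀ i (x : (Wᗮ : Submodule ℂ ℬ)),
      (inner ℂ ((a i : E)) (((x : ℬ) : E)) : ℂ) = 0 := by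
    intro i x
    rw [ha_inner_B i (x : ℬ)]
    exact Submodule.inner_right_of_mem_orthogonal (hcBW i) x.2
  -- orthonormality of b
  have hb_on : Orthonormal ℂ b := by
    rw [orthonormal_iff_ite]
    intro j k
    by_cases hj : (j : ℕ) < r <;> by_cases hk : (k : ℕ) < r
    · simp only [b, dif_pos hj, dif_pos hk]
      rw [← Submodule.coe_inner, hginner]
      have : (⟨(j : ℕ), hj⟩ : Fin r) = ⟨(k : ℕ), hk⟩ ↔ j = k := by
        simp only [Fin.ext_iff, Fin.val_mk]
      by_cases h : j = k
      · rw [if_pos (this.mpr h), if_pos h]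
      · rw [if_neg (fun hh => h (this.mp hh)), if_neg h]
    · simp only [b, dif_pos hj, dif_neg hk]
      rw [if_neg (by intro h; subst h; exact hk hj)]
      rw [← Submodule.coe_inner]
      exact Submodule.inner_right_of_mem_orthogonal
        (Submodule.subset_span (Set.mem_range_self _)) (e _).2
    · simp only [b, dif_neg hj, dif_pos hk]
      rw [if_neg (by intro h; subst h; exact hj hk)]
      rw [← Submodule.coe_inner]
      exact Submodule.inner_left_of_mem_orthogonal
        (Submodule.subset_span (Set.mem_range_self _)) (e _).2
    · simp only [b, dif_neg hj, dif_neg hk]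
      rw [coe_coe_inner, orthonormal_iff_ite.mp e.orthonormal]
      have : (⟨(j : ℕ) - r, by omega⟩ : Fin (nB - r)) = ⟨(k : ℕ) - r, by omega⟩ ↔ j = k := by
        simp only [Fin.ext_iff, Fin.val_mk]
        omega
      by_cases h : j = k
      · rw [if_pos (this.mpr h), if_pos h]
      · rw [if_neg (fun hh => h (this.mp hh)), if_neg h]
  -- the a family in E
  refine ⟨fun i => (a i : E), b, ?_, hb_on, fun i => (a i).2, hbmem, ?_, ?_, ?_, ?_⟩
  · rw [orthonormal_iff_ite]
    intro i j
    rw [← Submodule.coe_inner, orthonormal_iff_ite.mp ha_on]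
  · -- span of a
    have h1 : Set.range (fun i => ((a i : E))) = 𝒜.subtype '' (Set.range B) := by
      rw [show (fun i => ((a i : E))) = 𝒜.subtype ∘ (B ∘ σ) from rfl]
      rw [Set.range_comp, Set.range_comp]
      congr 1
      exact Set.range_eq_univ.mpr σ.surjective ▸ by simp [Set.image_univ]
    rw [h1, Submodule.span_image, ← OrthonormalBasis.coe_toBasis B, Basis.span_eq,
      Submodule.map_subtype_top]
  · -- span of b
    have hle : Submodule.span ℂ (Set.range b) ≤ ℬ := by
      rw [Submodule.span_le]
      rintro x ⟨j, rfl⟩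
      exact hbmem j
    refine Submodule.eq_of_le_of_finrank_le hle ?_
    rw [finrank_span_eq_card hb_on.linearIndependent, Fintype.card_fin]
  · -- off-diagonal
    intro i j hij
    by_cases hj : (j : ℕ) < r
    · simp only [b, dif_pos hj]
      rw [ha_inner_B i (g ⟨(j : ℕ), hj⟩)]
      simp only [g, inner_smul_right]
      rw [Submodule.coe_inner, key2]
      rw [if_neg (fun h => hij (by simpa [ι] using congrArg Fin.val h))]
      ring
    · simp only [b, dif_neg hj]
      exact ha_perp i _
  · -- diagonal
    intro i j hij
    by_cases hj : (j : ℕ) < r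
    · refine ⟨Real.sqrt (μ (ι ⟨(j : ℕ), hj⟩)), Real.sqrt_nonneg _, ?_⟩
      simp only [b, dif_pos hj]
      rw [ha_inner_B i (g ⟨(j : ℕ), hj⟩)]
      simp only [g, inner_smul_right]
      rw [Submodule.coe_inner, key2]
      have hieq : i = ι ⟨(j : ℕ), hj⟩ := Fin.ext (by simpa [ι] using hij)
      rw [if_pos hieq, mul_one, ← Complex.ofReal_mul]
      congr 1
      rw [inv_mul_eq_iff_eq_mul₀ (hsqrt_pos _).ne']
      exact (Real.mul_self_sqrt (hμnonneg _)).symm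
    · exact ⟨0, le_refl 0, by simpa [b, dif_neg hj] using ha_perp i _⟩


end AuxJordan

/-- Jordan (canonical) bases: for subspaces `𝒜, ℬ` of `ℂ^d` there exist orthonormal bases
`(a_i)` of `𝒜` and `(b_j)` of `ℬ` with `⟨a_i, b_j⟩ = 0` for `i ≠ j` and `⟨a_k, b_k⟩ ≥ 0`. -/
theorem stmt_18 {d : ℕ} (𝒜 ℬ : Submodule ℂ (EuclideanSpace ℂ (Fin d))) :
    ∃ (a : Fin (finrank ℂ 𝒜) → EuclideanSpace ℂ (Fin d))
      (b : Fin (finrank ℂ ℬ) → EuclideanSpace ℂ (Fin d)),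
      Orthonormal ℂ a ∧ Orthonormal ℂ b ∧
      (∀ i, a i ∈ 𝒜) ∧ (∀ j, b j ∈ ℬ) ∧
      Submodule.span ℂ (Set.range a) = 𝒜 ∧ Submodule.span ℂ (Set.range b) = ℬ ∧
      (∀ (i : Fin (finrank ℂ 𝒜)) (j : Fin (finrank ℂ ℬ)),
        (i : ℕ) ≠ (j : ℕ) → (inner ℂ (a i) (b j) : ℂ) = 0) ∧
      (∀ (i : Fin (finrank ℂ 𝒜)) (j : Fin (finrank ℂ ℬ)),
        (i : ℕ) = (j : ℕ) → ∃ r : ℝ, 0 ≤ r ∧ (inner ℂ (a i) (b j) : ℂ) = (r : ℂ)) := by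
  exact jordan_bases 𝒜 ℬ
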